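/- For n ≥ 5, the three n-dimensional complex Zinbiel algebras F_n^1, F_n^2, F_n^3 are pairwise non-isomorphic. -/
import Mathlib


/-- A bilinear multiplication `mul` is a *Zinbiel* multiplication if it satisfies
`(x∘y)∘z = x∘(y∘z) + x∘(z∘y)`. -/
def IsZinbiel {K A : Type*} [CommRing K] [AddCommGroup A] [Module K A]
    (mul : A →ₗ[K] A →ₗ[K] A) : Prop :=
  ∀ x y z : A, mul (mul x y) z = mul x (mul y z) + mul x (mul z y)

/-- The descending series of a (Zinbiel) algebra: `zpow mul i` is `A^i`,
with `A^1 = A` and `A^{k+1} = A ∘ A^k` (we also set `A^0 = A` for convenience). -/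
def zpow {K A : Type*} [CommRing K] [AddCommGroup A] [Module K A]
    (mul : A →ₗ[K] A →ₗ[K] A) : ℕ → Submodule K A
  | 0 => ⊤
  | 1 => ⊤
  | (k+2) => Submodule.span K {z | ∃ a : A, ∃ b ∈ zpow mul (k+1), z = mul a b}

/-- The bilinear multiplication on `Fin n → ℂ` determined by structure constants `c`:
`e_i ∘ e_j = ∑ k, c i j k • e_k`. -/
noncomputable def mulOf (n : ℕ) (c : Fin n → Fin n → Fin n → ℂ) :
    (Fin n → ℂ) →ₗ[ℂ] (Fin n → ℂ) →ₗ[ℂ] (Fin n → ℂ) :=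
  LinearMap.mk₂ ℂ (fun x y k => ∑ i, ∑ j, x i * y j * c i j k)
    (fun x x' y => by
      funext k
      simp [add_mul, Finset.sum_add_distrib])
    (fun a x y => by
      funext k
      simp [Finset.mul_sum, mul_assoc])
    (fun x y y' => by
      funext k
      simp [mul_add, add_mul, Finset.sum_add_distrib])
    (fun a x y => by
      funext k
      simp [Finset.mul_sum, mul_assoc, mul_left_comm])

/-- Two bilinear multiplications give isomorphic algebras if there is a linear
equivalence intertwining them. -/
def Isom {A B : Type*} [AddCommGroup A] [Module ℂ A] [AddCommGroup B] [Module ℂ B]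
    (mulA : A →ₗ[ℂ] A →ₗ[ℂ] A) (mulB : B →ₗ[ℂ] B →ₗ[ℂ] B) : Prop :=
  ∃ f : A ≃ₗ[ℂ] B, ∀ x y : A, f (mulA x y) = mulB (f x) (f y)

/-- Structure constants of the nul-filiform algebra `NF_n`:
`e_i ∘ e_j = C(i+j-1, j) e_{i+j}` for `2 ≤ i+j ≤ n` (1-indexed). -/
noncomputable def NFc (n : ℕ) : Fin n → Fin n → Fin n → ℂ := fun i j k =>
  if (i : ℕ) + j + 1 = (k : ℕ) then (((i : ℕ) + j + 1).choose ((j : ℕ) + 1) : ℂ) else 0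

/-- The nul-filiform Zinbiel algebra `NF_n` (as a multiplication on `Fin n → ℂ`). -/
noncomputable def NFmul (n : ℕ) : (Fin n → ℂ) →ₗ[ℂ] (Fin n → ℂ) →ₗ[ℂ] (Fin n → ℂ) :=
  mulOf n (NFc n)

/-- Structure constants of the filiform algebra `F_n = F_n^1`:
`e_i ∘ e_j = C(i+j-1, j) e_{i+j}` for `2 ≤ i+j ≤ n-1` (1-indexed), other products zero. -/
noncomputable def F1c (n : ℕ) : Fin n → Fin n → Fin n → ℂ := fun i j k =>
  if (i : ℕ) + j + 1 = (k : ℕ) ∧ (k : ℕ) + 1 ≤ n - 1 then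
    (((i : ℕ) + j + 1).choose ((j : ℕ) + 1) : ℂ) else 0

/-- Structure constants of `F_n^2`: those of `F_n^1` together with `e_n ∘ e_1 = e_{n-1}`. -/
noncomputable def F2c (n : ℕ) : Fin n → Fin n → Fin n → ℂ := fun i j k =>
  F1c n i j k + (if (i : ℕ) = n - 1 ∧ (j : ℕ) = 0 ∧ (k : ℕ) = n - 2 then 1 else 0)

/-- Structure constants of `F_n^3`: those of `F_n^1` together with `e_n ∘ e_n = e_{n-1}`. -/
noncomputable def F3c (n : ℕ) : Fin n → Fin n → Fin n → ℂ := fun i j k =>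
  F1c n i j k + (if (i : ℕ) = n - 1 ∧ (j : ℕ) = n - 1 ∧ (k : ℕ) = n - 2 then 1 else 0)

/- ### auxiliary evaluation lemmas -/

lemma mulOf_apply' (n : ℕ) (c : Fin n → Fin n → Fin n → ℂ) (x y : Fin n → ℂ) (k : Fin n) :
    mulOf n c x y k = ∑ i, ∑ j, x i * y j * c i j k := rfl

lemma mulOf_single_left (n : ℕ) (c : Fin n → Fin n → Fin n → ℂ) (u : Fin n)
    (x : Fin n → ℂ) (k : Fin n) :
    mulOf n c (Pi.single u 1) x k = ∑ j, x j * c u j k := by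
  rw [mulOf_apply', Fintype.sum_eq_single u]
  · simp
  · intro i hi; simp [Pi.single_apply, hi]

lemma mulOf_single_right (n : ℕ) (c : Fin n → Fin n → Fin n → ℂ)
    (x : Fin n → ℂ) (v : Fin n) (k : Fin n) :
    mulOf n c x (Pi.single v 1) k = ∑ i, x i * c i v k := by
  rw [mulOf_apply']
  apply Finset.sum_congr rfl
  intro i _
  rw [Fintype.sum_eq_single v]
  · simp
  · intro j hj; simp [Pi.single_apply, hj]

lemma mulOf_single_single (n : ℕ) (c : Fin n → Fin n → Fin n → ℂ) (u v k : Fin n) :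
    mulOf n c (Pi.single u 1) (Pi.single v 1) k = c u v k := by
  rw [mulOf_single_left, Fintype.sum_eq_single v]
  · simp
  · intro j hj; simp [Pi.single_apply, hj]

/- ### isomorphism invariance lemmas -/

lemma isom_symm {A B : Type*} [AddCommGroup A] [Module ℂ A] [AddCommGroup B] [Module ℂ B]
    {mulA : A →ₗ[ℂ] A →ₗ[ℂ] A} {mulB : B →ₗ[ℂ] B →ₗ[ℂ] B}
    (h : Isom mulA mulB) : Isom mulB mulA := by
  obtain ⟨f, hf⟩ := h
  refine ⟨f.symm, fun x y => f.injective ?_⟩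
  rw [hf]
  simp

/-- If `mulA` satisfies "right annihilator ⊆ left annihilator" but `mulB` has a witness
violating it, they are not isomorphic. -/
lemma not_isom_of_ann {A B : Type*} [AddCommGroup A] [Module ℂ A] [AddCommGroup B] [Module ℂ B]
    {mulA : A →ₗ[ℂ] A →ₗ[ℂ] A} {mulB : B →ₗ[ℂ] B →ₗ[ℂ] B}
    (hA : ∀ x : A, (∀ a, mulA a x = 0) → ∀ b, mulA x b = 0)
    (x : B) (hx : ∀ a, mulB a x = 0) (b : B) (hxb : mulB x b ≠ 0) :
    ¬ Isom mulA mulB := by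
  rintro ⟨f, hf⟩
  have h1 : ∀ a : A, mulA a (f.symm x) = 0 := by
    intro a
    apply f.injective
    rw [hf]
    simp [hx]
  have h2 := hA _ h1 (f.symm b)
  apply hxb
  calc mulB x b = mulB (f (f.symm x)) (f (f.symm b)) := by simp
    _ = f (mulA (f.symm x) (f.symm b)) := (hf _ _).symm
    _ = 0 := by rw [h2]; simp

/-- If in `mulB` every right annihilator element lies in the span of products, while `mulA`
has a right-annihilator element outside the span of products, they are not isomorphic. -/
lemma not_isom_of_span {A B : Type*} [AddCommGroup A] [Module ℂ A] [AddCommGroup B] [Module ℂ B]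
    {mulA : A →ₗ[ℂ] A →ₗ[ℂ] A} {mulB : B →ₗ[ℂ] B →ₗ[ℂ] B}
    (hB : ∀ y : B, (∀ a, mulB a y = 0) →
      y ∈ Submodule.span ℂ {z : B | ∃ a b, z = mulB a b})
    (x : A) (hx : ∀ a, mulA a x = 0)
    (hxs : x ∉ Submodule.span ℂ {z : A | ∃ a b, z = mulA a b}) :
    ¬ Isom mulA mulB := by
  rintro ⟨f, hf⟩
  have h1 : ∀ a : B, mulB a (f x) = 0 := by
    intro a
    have : mulB (f (f.symm a)) (f x) = 0 := by
      rw [← hf, hx]; simp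
    simpa using this
  have h2 := hB _ h1
  apply hxs
  have h3 : ∀ y ∈ Submodule.span ℂ {z : B | ∃ a b, z = mulB a b},
      f.symm y ∈ Submodule.span ℂ {z : A | ∃ a b, z = mulA a b} := by
    intro y hy
    induction hy using Submodule.span_induction with
    | mem z hz =>
      obtain ⟨a, b, rfl⟩ := hz
      apply Submodule.subset_span
      exact ⟨f.symm a, f.symm b, f.injective (by rw [hf]; simp)⟩
    | zero => simp
    | add u v _ _ hu hv => rw [map_add]; exact Submodule.add_mem _ hu hv
    | smul c u _ hu => rw [map_smul]; exact Submodule.smul_mem _ _ hu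
  have := h3 _ h2
  simpa using this

/- ### structure-constant vanishing facts -/

section facts
variable {n : ℕ} (hn : 5 ≤ n)

lemma F1c_zero_of_large {i j k : Fin n} (hi : n - 2 ≤ (i : ℕ)) : F1c n i j k = 0 := by
  have hk := k.isLt
  simp only [F1c]
  rw [if_neg]
  rintro ⟨h1, h2⟩
  omega

lemma F1c_last_out (i j : Fin n) (k : Fin n) (hk : (k : ℕ) = n - 1) (hn : 5 ≤ n) :
    F1c n i j k = 0 := by
  simp only [F1c]
  rw [if_neg]
  rintro ⟨h1, h2⟩
  omega

lemma F1c_last_col (i k : Fin n) (v : Fin n) (hv : (v : ℕ) = n - 1) : F1c n i v k = 0 := by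
  have hk := k.isLt
  have hn1 : 1 ≤ n := by omega
  simp only [F1c]
  rw [if_neg]
  rintro ⟨h1, h2⟩
  omega

include hn

/-- Right-annihilator coordinate extraction for any structure constants agreeing with
`F1c` in the first row: if `mul a x = 0` for all `a` then `x j = 0` for `j ≤ n-3`. -/
lemma annR_coords (c : Fin n → Fin n → Fin n → ℂ)
    (hc : ∀ j k : Fin n, c ⟨0, by omega⟩ j k = F1c n ⟨0, by omega⟩ j k)
    (x : Fin n → ℂ) (hx : ∀ a, mulOf n c a x = 0)
    (j : Fin n) (hj : (j : ℕ) + 3 ≤ n) : x j = 0 := by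
  have h := congrFun (hx (Pi.single ⟨0, by omega⟩ 1)) ⟨(j : ℕ) + 1, by omega⟩
  rw [mulOf_single_left] at h
  simp only [hc] at h
  rw [Fintype.sum_eq_single j] at h
  · rw [show (0 : Fin n → ℂ) ⟨(j : ℕ) + 1, by omega⟩ = 0 from rfl] at h
    have hval : F1c n ⟨0, by omega⟩ j ⟨(j : ℕ) + 1, by omega⟩ = 1 := by
      simp only [F1c]
      rw [if_pos]
      · simp
      · constructor
        · omega
        · omega
    rw [hval, mul_one] at h
    exact h
  · intro j' hj'
    have : F1c n ⟨0, by omega⟩ j' ⟨(j : ℕ) + 1, by omega⟩ = 0 := by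
      simp only [F1c]
      rw [if_neg]
      rintro ⟨h1, h2⟩
      apply hj'
      apply Fin.ext
      simpa using h1
    rw [this, mul_zero]

/-- In `F1`, the right annihilator is contained in the left annihilator. -/
lemma P_F1 : ∀ x : Fin n → ℂ, (∀ a, mulOf n (F1c n) a x = 0) →
    ∀ b, mulOf n (F1c n) x b = 0 := by
  intro x hx b
  funext k
  rw [mulOf_apply']
  show _ = (0 : Fin n → ℂ) k
  rw [show (0 : Fin n → ℂ) k = 0 from rfl]
  apply Finset.sum_eq_zero
  intro i _
  by_cases hi : (i : ℕ) + 3 ≤ n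
  · rw [annR_coords hn (F1c n) (fun _ _ => rfl) x hx i hi]
    simp
  · apply Finset.sum_eq_zero
    intro j _
    rw [F1c_zero_of_large (by have := i.isLt; omega), mul_zero]

/-- last basis vector is in the right annihilator of `F1`. -/
lemma last_annR_F1 : ∀ a, mulOf n (F1c n) a (Pi.single (⟨n - 1, by omega⟩ : Fin n) 1) = 0 := by
  intro a
  funext k
  rw [mulOf_single_right]
  show _ = (0 : Fin n → ℂ) k
  rw [show (0 : Fin n → ℂ) k = 0 from rfl]
  apply Finset.sum_eq_zero
  intro i _
  rw [F1c_last_col i k _ (by simp), mul_zero]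

/-- last basis vector is in the right annihilator of `F2`. -/
lemma last_annR_F2 : ∀ a, mulOf n (F2c n) a (Pi.single (⟨n - 1, by omega⟩ : Fin n) 1) = 0 := by
  intro a
  funext k
  rw [mulOf_single_right]
  show _ = (0 : Fin n → ℂ) k
  rw [show (0 : Fin n → ℂ) k = 0 from rfl]
  apply Finset.sum_eq_zero
  intro i _
  have h1 : F2c n i ⟨n - 1, by omega⟩ k = 0 := by
    simp only [F2c]
    rw [F1c_last_col i k _ (by simp), if_neg, add_zero]
    rintro ⟨_, h2, _⟩
    omega
  rw [h1, mul_zero]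

/-- but the last basis vector is NOT in the left annihilator of `F2`. -/
lemma last_not_annL_F2 :
    mulOf n (F2c n) (Pi.single (⟨n - 1, by omega⟩ : Fin n) 1)
      (Pi.single (⟨0, by omega⟩ : Fin n) 1) ≠ 0 := by
  intro h
  have := congrFun h ⟨n - 2, by omega⟩
  rw [mulOf_single_single] at this
  rw [show (0 : Fin n → ℂ) ⟨n - 2, by omega⟩ = 0 from rfl] at this
  have hval : F2c n (⟨n - 1, by omega⟩ : Fin n) (⟨0, by omega⟩ : Fin n) ⟨n - 2, by omega⟩ = 1 := by
    simp only [F2c]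
    rw [F1c_zero_of_large (by simp; omega), if_pos (by simp), zero_add]
  rw [hval] at this
  exact one_ne_zero this

/-- In `F3`, the right annihilator is spanned by `e_{n-2}` (0-indexed); in particular
every right-annihilator element has `x j = 0` for `j ≠ n - 2`. -/
lemma annR_F3_coords (x : Fin n → ℂ) (hx : ∀ a, mulOf n (F3c n) a x = 0)
    (j : Fin n) (hj : (j : ℕ) ≠ n - 2) : x j = 0 := by
  by_cases hj' : (j : ℕ) + 3 ≤ n
  · refine annR_coords hn (F3c n) ?_ x hx j hj'
    intro j' k
    simp only [F3c]
    rw [if_neg, add_zero]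
    rintro ⟨h1, _⟩
    omega
  · -- j = n - 1
    have hjn : (j : ℕ) = n - 1 := by have := j.isLt; omega
    have h := congrFun (hx (Pi.single ⟨n - 1, by omega⟩ 1)) ⟨n - 2, by omega⟩
    rw [mulOf_single_left] at h
    rw [show (0 : Fin n → ℂ) ⟨n - 2, by omega⟩ = 0 from rfl] at h
    rw [Fintype.sum_eq_single j] at h
    · have hval : F3c n ⟨n - 1, by omega⟩ j ⟨n - 2, by omega⟩ = 1 := by
        simp only [F3c]
        rw [F1c_zero_of_large (by simp; omega), if_pos (by simp [hjn]), zero_add]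
      rw [hval, mul_one] at h
      exact h
    · intro j' hj'
      have hval : F3c n ⟨n - 1, by omega⟩ j' ⟨n - 2, by omega⟩ = 0 := by
        simp only [F3c]
        rw [F1c_zero_of_large (by simp; omega), if_neg, add_zero]
        rintro ⟨_, h2, _⟩
        apply hj'
        apply Fin.ext
        omega
      rw [hval, mul_zero]

/-- In `F3`, the right annihilator is contained in the left annihilator. -/
lemma P_F3 : ∀ x : Fin n → ℂ, (∀ a, mulOf n (F3c n) a x = 0) →
    ∀ b, mulOf n (F3c n) x b = 0 := by
  intro x hx b
  funext k
  rw [mulOf_apply']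
  show _ = (0 : Fin n → ℂ) k
  rw [show (0 : Fin n → ℂ) k = 0 from rfl]
  apply Finset.sum_eq_zero
  intro i _
  by_cases hi : (i : ℕ) = n - 2
  · apply Finset.sum_eq_zero
    intro j _
    have hval : F3c n i j k = 0 := by
      simp only [F3c]
      rw [F1c_zero_of_large (by omega), if_neg (by rintro ⟨h1, _⟩; omega), add_zero]
    rw [hval, mul_zero]
  · rw [annR_F3_coords hn x hx i hi]
    simp

/-- In `F3`, every right-annihilator element lies in the span of products. -/
lemma Q_F3 : ∀ y : Fin n → ℂ, (∀ a, mulOf n (F3c n) a y = 0) →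
    y ∈ Submodule.span ℂ {z : Fin n → ℂ | ∃ a b, z = mulOf n (F3c n) a b} := by
  intro y hy
  have hprod : mulOf n (F3c n) (Pi.single (⟨n - 1, by omega⟩ : Fin n) 1)
      (Pi.single (⟨n - 1, by omega⟩ : Fin n) 1) = Pi.single (⟨n - 2, by omega⟩ : Fin n) 1 := by
    funext k
    rw [mulOf_single_single]
    simp only [F3c]
    rw [F1c_zero_of_large (by simp; omega), zero_add]
    rw [Pi.single_apply]
    by_cases hk : k = (⟨n - 2, by omega⟩ : Fin n)
    · rw [if_pos (by simp [hk]), if_pos hk]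
    · rw [if_neg, if_neg hk]
      rintro ⟨_, _, h3⟩
      exact hk (Fin.ext (by simpa using h3))
  have hy2 : y = (y ⟨n - 2, by omega⟩ : ℂ) • (Pi.single (⟨n - 2, by omega⟩ : Fin n) (1 : ℂ) : Fin n → ℂ) := by
    funext k
    by_cases hk : k = (⟨n - 2, by omega⟩ : Fin n)
    · subst hk; simp
    · rw [annR_F3_coords hn y hy k (fun h => hk (Fin.ext (by simpa using h)))]
      simp [Pi.single_apply, hk]
  rw [hy2, ← hprod]
  exact Submodule.smul_mem _ _ (Submodule.subset_span ⟨_, _, rfl⟩)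

/-- In `F1` (and `F2`), the last basis vector is not in the span of products. -/
lemma last_not_span (c : Fin n → Fin n → Fin n → ℂ)
    (hc : ∀ i j : Fin n, c i j ⟨n - 1, by omega⟩ = 0) :
    Pi.single (⟨n - 1, by omega⟩ : Fin n) (1 : ℂ) ∉
      Submodule.span ℂ {z : Fin n → ℂ | ∃ a b, z = mulOf n c a b} := by
  intro h
  have hker : Submodule.span ℂ {z : Fin n → ℂ | ∃ a b, z = mulOf n c a b} ≤
      LinearMap.ker (LinearMap.proj (⟨n - 1, by omega⟩ : Fin n) :
        (Fin n → ℂ) →ₗ[ℂ] ℂ) := by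
    rw [Submodule.span_le]
    rintro z ⟨a, b, rfl⟩
    simp only [SetLike.mem_coe, LinearMap.mem_ker, LinearMap.proj_apply]
    rw [mulOf_apply']
    apply Finset.sum_eq_zero
    intro i _
    apply Finset.sum_eq_zero
    intro j _
    rw [hc, mul_zero]
  have := hker h
  simp only [LinearMap.mem_ker, LinearMap.proj_apply] at this
  rw [Pi.single_apply, if_pos rfl] at this
  exact one_ne_zero this

end facts


/-- For `n ≥ 5`, the algebras `F_n^1`, `F_n^2`, `F_n^3` are pairwise
non-isomorphic. -/
theorem filiform_pairwise_nonisomorphic (n : ℕ) (hn : 5 ≤ n) :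
    ¬ Isom (mulOf n (F1c n)) (mulOf n (F2c n)) ∧
    ¬ Isom (mulOf n (F1c n)) (mulOf n (F3c n)) ∧
    ¬ Isom (mulOf n (F2c n)) (mulOf n (F3c n)) := by
  refine ⟨?_, ?_, ?_⟩
  · -- F1 vs F2 : right-ann ⊆ left-ann holds for F1, fails for F2
    exact not_isom_of_ann (P_F1 hn) _ (last_annR_F2 hn) _ (last_not_annL_F2 hn)
  · -- F1 vs F3 : span-of-products invariant
    apply not_isom_of_span (Q_F3 hn) (Pi.single ⟨n - 1, by omega⟩ 1) (last_annR_F1 hn)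
    apply last_not_span hn
    intro i j
    exact F1c_last_out i j _ rfl hn
  · -- F2 vs F3 : right-ann ⊆ left-ann holds for F3, fails for F2
    intro h
    exact not_isom_of_ann (P_F3 hn) _ (last_annR_F2 hn) _ (last_not_annL_F2 hn) (isom_symm h)
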